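/- For every n ≥ 2, in the scenario [(2 n),(2 2 … 2)]: (i) every local behavior P satisfies I_n(P) ≥ 0, and (ii) there exist n(n+2) local behaviors P^{(1)},…,P^{(n(n+2))}, each satisfying I_n(P^{(i)}) = 0, which are affinely independent as points of the real vector space indexed by the coordinates P(ab|xy). (Since the local polytope of this scenario has affine dimension n(n+2), this means the inequality I_n(P) ≥ 0 defines a facet of the local polytope.) -/

import Mathlib

/-!
Bell scenario [(2 n),(2 2 … 2)]: party A has two measurements, measurement `1` with
outcomes `{1,2}` and measurement `2` with outcomes `{1,…,n}`; party B has `n`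
measurements, each with outcomes `{1,2}`.  A behavior is given by a pair of families
`P1 : Fin n → Fin 2 → Fin 2 → ℝ` and `P2 : Fin n → Fin n → Fin 2 → ℝ`, where
`P1 y a b = P(ab|1y)` and `P2 y a b = P(ab|2y)`.  The paper's label `k ∈ {1,…,n}`
(for measurements of B and for outcomes of A's second measurement) corresponds to the
index `k-1`, and the labels `1`,`2` correspond to the indices `0`,`1`.
-/

/-- The behavior `(P1, P2)` is a convex combination of deterministic behaviors
`P(ab|xy) = δ_{a,α_x} δ_{b,β_y}` with `α_1 : Fin 2`, `α_2 : Fin n`, `β : Fin n → Fin 2`. -/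
def IsLocal2n {n : ℕ} (P1 : Fin n → Fin 2 → Fin 2 → ℝ)
    (P2 : Fin n → Fin n → Fin 2 → ℝ) : Prop :=
  ∃ q : Fin 2 → Fin n → (Fin n → Fin 2) → ℝ,
    (∀ α₁ α₂ β, 0 ≤ q α₁ α₂ β) ∧
    (∑ α₁, ∑ α₂, ∑ β, q α₁ α₂ β) = 1 ∧
    (∀ (y : Fin n) (a b : Fin 2),
      P1 y a b = ∑ α₁, ∑ α₂, ∑ β,
        q α₁ α₂ β * (if α₁ = a then 1 else 0) * (if β y = b then 1 else 0)) ∧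
    (∀ (y : Fin n) (a : Fin n) (b : Fin 2),
      P2 y a b = ∑ α₁, ∑ α₂, ∑ β,
        q α₁ α₂ β * (if α₂ = a then 1 else 0) * (if β y = b then 1 else 0))

/-- The Bell expression
`I_n(P) = P_A(1|1) + Σ_{k=1}^{n−1} P_B(1|k) − Σ_{k=1}^{n} P(11|1k) − Σ_{k=1}^{n−1} P(k1|2k)
          + Σ_{k=1}^{n−1} P(k1|2n)`,
where the marginals are computed as `P_A(1|1) = Σ_b P(1b|1 1)` and
`P_B(1|k) = Σ_a P(a1|1k)` (well-defined choices for local behaviors). -/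
noncomputable def BellIn (n : ℕ) (hn : 2 ≤ n) (P1 : Fin n → Fin 2 → Fin 2 → ℝ)
    (P2 : Fin n → Fin n → Fin 2 → ℝ) : ℝ :=
  (∑ b, P1 ⟨0, by omega⟩ 0 b)
  + (∑ k : Fin (n - 1), ∑ a, P1 (Fin.castLE (Nat.sub_le n 1) k) a 0)
  - (∑ y : Fin n, P1 y 0 0)
  - (∑ k : Fin (n - 1),
      P2 (Fin.castLE (Nat.sub_le n 1) k) (Fin.castLE (Nat.sub_le n 1) k) 0)
  + (∑ k : Fin (n - 1), P2 ⟨n - 1, by omega⟩ (Fin.castLE (Nat.sub_le n 1) k) 0)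

namespace InFacet

variable {m : ℕ}

noncomputable def detVal (m : ℕ) (α₁ : Fin 2) (α₂ : Fin (m+1)) (β : Fin (m+1) → Fin 2) : ℝ :=
  (if α₁ = 0 then 1 else 0)
  + (∑ k : Fin m, if β k.castSucc = 0 then (1:ℝ) else 0)
  - (if α₁ = 0 then (1:ℝ) else 0) * (∑ y, if β y = 0 then (1:ℝ) else 0)
  - (∑ k : Fin m, (if α₂ = k.castSucc then (1:ℝ) else 0) * (if β k.castSucc = 0 then 1 else 0))
  + (∑ k : Fin m, (if α₂ = k.castSucc then (1:ℝ) else 0) * (if β (Fin.last m) = 0 then 1 else 0))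

lemma detVal_nonneg (α₁ : Fin 2) (α₂ : Fin (m+1)) (β : Fin (m+1) → Fin 2) :
    0 ≤ detVal m α₁ α₂ β := by
  unfold detVal
  rw [Fin.sum_univ_castSucc (fun y => if β y = 0 then (1:ℝ) else 0)]
  set S := ∑ k : Fin m, if β k.castSucc = 0 then (1:ℝ) else 0 with hSdef
  set t : ℝ := if β (Fin.last m) = 0 then 1 else 0 with htdef
  have hS0 : 0 ≤ S := Finset.sum_nonneg (by intro k _; positivity)
  have ht0 : 0 ≤ t := by rw [htdef]; positivity
  have ht1 : t ≤ 1 := by rw [htdef]; split <;> norm_num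
  rcases Fin.eq_castSucc_or_eq_last α₂ with ⟨k₀, rfl⟩ | rfl
  · have h4 : (∑ k : Fin m, (if (k₀.castSucc : Fin (m+1)) = k.castSucc then (1:ℝ) else 0) *
        (if β k.castSucc = 0 then 1 else 0)) = (if β k₀.castSucc = 0 then (1:ℝ) else 0) := by
      rw [Finset.sum_eq_single k₀]
      · simp
      · intro k _ hk
        rw [if_neg (by simpa [Fin.castSucc_inj] using (Ne.symm hk)), zero_mul]
      · simp
    have h5 : (∑ k : Fin m, (if (k₀.castSucc : Fin (m+1)) = k.castSucc then (1:ℝ) else 0) * t) = t := by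
      rw [Finset.sum_eq_single k₀]
      · simp
      · intro k _ hk
        rw [if_neg (by simpa [Fin.castSucc_inj] using (Ne.symm hk)), zero_mul]
      · simp
    rw [h4, h5]
    have hsk1 : (if β k₀.castSucc = 0 then (1:ℝ) else 0) ≤ 1 := by split <;> norm_num
    have hskS : (if β k₀.castSucc = 0 then (1:ℝ) else 0) ≤ S := by
      rw [hSdef]
      exact Finset.single_le_sum (f := fun k : Fin m => if β k.castSucc = 0 then (1:ℝ) else 0)
        (by intro k _; positivity) (Finset.mem_univ k₀)
    rcases eq_or_ne α₁ 0 with rfl | hne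
    <;> [skip; (rw [Fin.eq_one_of_neq_zero α₁ hne])]
    · norm_num; linarith
    · rw [if_neg hne]; simp only [zero_mul]; linarith
  · have h4 : (∑ k : Fin m, (if (Fin.last m : Fin (m+1)) = k.castSucc then (1:ℝ) else 0) *
        (if β k.castSucc = 0 then 1 else 0)) = 0 := by
      apply Finset.sum_eq_zero; intro k _
      rw [if_neg (Ne.symm (Fin.castSucc_lt_last k).ne), zero_mul]
    have h5 : (∑ k : Fin m, (if (Fin.last m : Fin (m+1)) = k.castSucc then (1:ℝ) else 0) * t) = 0 := by
      apply Finset.sum_eq_zero; intro k _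
      rw [if_neg (Ne.symm (Fin.castSucc_lt_last k).ne), zero_mul]
    rw [h4, h5]
    rcases eq_or_ne α₁ 0 with rfl | hne
    <;> [skip; (rw [Fin.eq_one_of_neq_zero α₁ hne])]
    · norm_num; linarith
    · rw [if_neg hne]; simp only [zero_mul]; linarith


noncomputable def dP1 (α₁ : Fin 2) (β : Fin (m+1) → Fin 2) :
    Fin (m+1) → Fin 2 → Fin 2 → ℝ :=
  fun y a b => (if α₁ = a then 1 else 0) * (if β y = b then 1 else 0)

noncomputable def dP2 (α₂ : Fin (m+1)) (β : Fin (m+1) → Fin 2) :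
    Fin (m+1) → Fin (m+1) → Fin 2 → ℝ :=
  fun y a b => (if α₂ = a then 1 else 0) * (if β y = b then 1 else 0)

lemma collapse1 {γ : Type*} [Fintype γ] [DecidableEq γ] (x : γ) (g : γ → ℝ)
    (h : ∀ y, y ≠ x → g y = 0) : ∑ y, g y = g x :=
  Finset.sum_eq_single x (fun y _ hy => h y hy) (by simp)

lemma dP_local (α₁ : Fin 2) (α₂ : Fin (m+1)) (β : Fin (m+1) → Fin 2) :
    IsLocal2n (dP1 α₁ β) (dP2 α₂ β) := by
  refine ⟨fun a b c => (if a = α₁ then 1 else 0) * (if b = α₂ then 1 else 0) *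
      (if c = β then 1 else 0), ?_, ?_, ?_, ?_⟩
  · intro a b c; positivity
  · rw [collapse1 α₁]
    · rw [collapse1 α₂]
      · rw [collapse1 β]
        · simp
        · intro c hc; simp [hc]
      · intro b hb
        apply Finset.sum_eq_zero; intro c _; simp [hb]
    · intro a ha
      apply Finset.sum_eq_zero; intro b _
      apply Finset.sum_eq_zero; intro c _; simp [ha]
  · intro y a b
    rw [collapse1 α₁]
    · rw [collapse1 α₂]
      · rw [collapse1 β]
        · simp [dP1]
        · intro c hc; simp [hc]
      · intro x hx
        apply Finset.sum_eq_zero; intro c _; simp [hx]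
    · intro x hx
      apply Finset.sum_eq_zero; intro b' _
      apply Finset.sum_eq_zero; intro c _; simp [hx]
  · intro y a b
    rw [collapse1 α₁]
    · rw [collapse1 α₂]
      · rw [collapse1 β]
        · simp [dP2]
        · intro c hc; simp [hc]
      · intro x hx
        apply Finset.sum_eq_zero; intro c _; simp [hx]
    · intro x hx
      apply Finset.sum_eq_zero; intro b' _
      apply Finset.sum_eq_zero; intro c _; simp [hx]

lemma bell_det (hn : 2 ≤ m + 1) (α₁ : Fin 2) (α₂ : Fin (m+1)) (β : Fin (m+1) → Fin 2) :
    BellIn (m+1) hn (dP1 α₁ β) (dP2 α₂ β) = detVal m α₁ α₂ β := by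
  unfold BellIn detVal dP1 dP2
  congr 1
  · congr 1
    · congr 1
      · congr 1
        · rw [← Finset.mul_sum]
          simp [Finset.sum_ite_eq]
          rcases (show ∀ x : Fin 2, x = 0 ∨ x = 1 by decide) (β 0) with h | h <;> simp [h]
        · apply Finset.sum_congr rfl
          intro k _
          rw [← Finset.sum_mul]
          simp [Finset.sum_ite_eq]
          rfl
      · rw [Finset.mul_sum]


lemma swap4 {ι : Type*} [Fintype ι] (f : ι → Fin 2 → Fin (m+1) → ((Fin (m+1)) → Fin 2) → ℝ) :
    ∑ i, ∑ a, ∑ b, ∑ c, f i a b c = ∑ a, ∑ b, ∑ c, ∑ i, f i a b c := by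
  rw [Finset.sum_comm]
  refine Finset.sum_congr rfl fun a _ => ?_
  rw [Finset.sum_comm]
  refine Finset.sum_congr rfl fun b _ => ?_
  rw [Finset.sum_comm]

lemma bell_local_eq (hn : 2 ≤ m + 1) (P1 : Fin (m+1) → Fin 2 → Fin 2 → ℝ)
    (P2 : Fin (m+1) → Fin (m+1) → Fin 2 → ℝ)
    (q : Fin 2 → Fin (m+1) → ((Fin (m+1)) → Fin 2) → ℝ)
    (h1 : ∀ (y : Fin (m+1)) (a b : Fin 2),
      P1 y a b = ∑ α₁, ∑ α₂, ∑ β,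
        q α₁ α₂ β * (if α₁ = a then 1 else 0) * (if β y = b then 1 else 0))
    (h2 : ∀ (y : Fin (m+1)) (a : Fin (m+1)) (b : Fin 2),
      P2 y a b = ∑ α₁, ∑ α₂, ∑ β,
        q α₁ α₂ β * (if α₂ = a then 1 else 0) * (if β y = b then 1 else 0)) :
    BellIn (m+1) hn P1 P2 = ∑ a, ∑ b, ∑ c, q a b c * detVal m a b c := by
  have H1 : (∑ bb : Fin 2, P1 ⟨0, by omega⟩ 0 bb)
      = ∑ a, ∑ b, ∑ c, q a b c * (if a = 0 then 1 else 0) := by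
    simp only [h1]
    rw [swap4]
    refine Finset.sum_congr rfl fun a _ => Finset.sum_congr rfl fun b _ =>
      Finset.sum_congr rfl fun c _ => ?_
    rw [← Finset.mul_sum]
    simp [Finset.sum_ite_eq]
    rcases (show ∀ x : Fin 2, x = 0 ∨ x = 1 by decide) (c 0) with h | h <;> simp [h]
  have H2 : ∀ y₀ : Fin (m+1), (∑ a' : Fin 2, P1 y₀ a' 0)
      = ∑ a, ∑ b, ∑ c, q a b c * (if c y₀ = 0 then 1 else 0) := by
    intro y₀
    simp only [h1]
    rw [swap4]
    refine Finset.sum_congr rfl fun a _ => Finset.sum_congr rfl fun b _ =>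
      Finset.sum_congr rfl fun c _ => ?_
    rw [← Finset.sum_mul, ← Finset.mul_sum]
    simp [Finset.sum_ite_eq]
  have H2' : (∑ k : Fin m, ∑ a' : Fin 2, P1 k.castSucc a' 0)
      = ∑ a, ∑ b, ∑ c, ∑ k : Fin m, q a b c * (if c k.castSucc = 0 then 1 else 0) := by
    rw [← swap4]
    exact Finset.sum_congr rfl fun k _ => H2 _
  have H3 : (∑ y : Fin (m+1), P1 y 0 0)
      = ∑ a, ∑ b, ∑ c, ∑ y : Fin (m+1),
          q a b c * (if a = 0 then 1 else 0) * (if c y = 0 then 1 else 0) := by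
    rw [← swap4]
    exact Finset.sum_congr rfl fun y _ => h1 y 0 0
  have H4 : ∀ (g : Fin m → Fin (m+1)) (y : Fin m → Fin (m+1)),
      (∑ k : Fin m, P2 (y k) (g k) 0)
      = ∑ a, ∑ b, ∑ c, ∑ k : Fin m,
          q a b c * (if b = g k then 1 else 0) * (if c (y k) = 0 then 1 else 0) := by
    intro g y
    rw [← swap4]
    exact Finset.sum_congr rfl fun k _ => h2 (y k) (g k) 0
  unfold BellIn
  show (∑ bb : Fin 2, P1 ⟨0, Nat.zero_lt_succ m⟩ 0 bb)
      + (∑ k : Fin m, ∑ a' : Fin 2, P1 k.castSucc a' 0)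
      - (∑ y : Fin (m+1), P1 y 0 0)
      - (∑ k : Fin m, P2 ((fun k : Fin m => k.castSucc) k) ((fun k : Fin m => k.castSucc) k) 0)
      + (∑ k : Fin m, P2 ((fun _ : Fin m => Fin.last m) k) ((fun k : Fin m => k.castSucc) k) 0)
      = ∑ a, ∑ b, ∑ c, q a b c * detVal m a b c
  rw [H1, H2', H3, H4 (fun k => k.castSucc) (fun k => k.castSucc),
    H4 (fun k => k.castSucc) (fun _ => Fin.last m)]
  simp only [← Finset.sum_add_distrib, ← Finset.sum_sub_distrib]
  refine Finset.sum_congr rfl fun a _ => Finset.sum_congr rfl fun b _ =>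
      Finset.sum_congr rfl fun c _ => ?_
  unfold detVal
  simp only [Finset.mul_sum, mul_add, mul_sub, ← mul_assoc]


def sig (K : Fin (m+1)) (l : ℕ) : Fin (m+1) :=
  if h : l + 1 ≤ m then
    (if l < K.val then ⟨l, by omega⟩ else ⟨l+1, by omega⟩)
  else K

lemma sig_ne {K : Fin (m+1)} {l : ℕ} (h : l + 1 ≤ m) : sig K l ≠ K := by
  unfold sig
  rw [dif_pos h]
  split <;> (intro hc; apply_fun Fin.val at hc; simp at hc; omega)

lemma sig_val {K : Fin (m+1)} {l : ℕ} (h : l + 1 ≤ m) :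
    (sig K l).val = if l < K.val then l else l + 1 := by
  unfold sig; rw [dif_pos h]; split <;> rfl

lemma sig_inj {K : Fin (m+1)} {l l' : ℕ} (h : l + 1 ≤ m) (h' : l' + 1 ≤ m)
    (he : sig K l = sig K l') : l = l' := by
  apply_fun Fin.val at he
  rw [sig_val h, sig_val h'] at he
  split_ifs at he <;> omega

def a1 (mm : Fin (m+3)) : Fin 2 := if mm.val = 0 ∨ mm.val = 2 then 1 else 0

def bet (K : Fin (m+1)) (mm : Fin (m+3)) : Fin (m+1) → Fin 2 :=
  fun y =>
    if mm.val = 0 then 1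
    else if mm.val ≤ 2 then (if y = K then 0 else 1)
    else if y = K ∨ y = sig K (mm.val - 3) then 0 else 1

lemma sumC (x : Fin (m+1)) :
    (∑ k : Fin m, if (k.castSucc : Fin (m+1)) = x then (1:ℝ) else 0)
      = if x.val < m then 1 else 0 := by
  by_cases hx : x.val < m
  · rw [if_pos hx, Finset.sum_eq_single ⟨x.val, hx⟩]
    · rw [if_pos (Fin.ext rfl : (Fin.castSucc ⟨x.val, hx⟩ : Fin (m+1)) = x)]
    · intro k _ hk
      rw [if_neg]
      intro hc
      exact hk (Fin.ext (by simpa using congrArg Fin.val hc))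
    · simp
  · rw [if_neg hx]
    apply Finset.sum_eq_zero
    intro k _
    rw [if_neg]
    intro hc
    have := congrArg Fin.val hc
    simp at this
    omega

lemma sumC' (x : Fin (m+1)) (g : Fin m → ℝ) :
    (∑ k : Fin m, (if x = (k.castSucc : Fin (m+1)) then (1:ℝ) else 0) * g k)
      = if h : x.val < m then g ⟨x.val, h⟩ else 0 := by
  by_cases hx : x.val < m
  · rw [dif_pos hx, Finset.sum_eq_single ⟨x.val, hx⟩]
    · rw [if_pos (Fin.ext rfl : x = (Fin.castSucc ⟨x.val, hx⟩ : Fin (m+1))), one_mul]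
    · intro k _ hk
      rw [if_neg, zero_mul]
      intro hc
      exact hk (Fin.ext (by simpa using (congrArg Fin.val hc).symm))
    · simp
  · rw [dif_neg hx]
    apply Finset.sum_eq_zero
    intro k _
    rw [if_neg, zero_mul]
    intro hc
    have := congrArg Fin.val hc
    simp at this
    omega

lemma ite01 (c : Prop) [Decidable c] (r s : ℝ) :
    (if (if c then (0:Fin 2) else 1) = 0 then r else s) = if c then r else s := by
  by_cases hc : c <;> simp [hc]

lemma ite_or_split (p q : Prop) [Decidable p] [Decidable q] (h : ¬(p ∧ q)) :
    (if p ∨ q then (1:ℝ) else 0) = (if p then (1:ℝ) else 0) + (if q then 1 else 0) := by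
  by_cases hp : p <;> by_cases hq : q <;> simp_all

lemma sum_ite_eq_one (x : Fin (m+1)) :
    (∑ y : Fin (m+1), if y = x then (1:ℝ) else 0) = 1 := by
  simp [Finset.sum_ite_eq']

lemma detVal_pt (K : Fin (m+1)) (mm : Fin (m+3)) :
    detVal m (a1 mm) K (bet K mm) = 0 := by
  have hmm := mm.isLt
  unfold detVal
  rcases Nat.lt_or_ge mm.val 3 with h3 | h3
  · have hc : mm.val = 0 ∨ mm.val = 1 ∨ mm.val = 2 := by omega
    rcases hc with h | h | h
    · -- mm = 0 : β ≡ 1, α₁ = 1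
      simp [a1, bet, h]
    · -- mm = 1 : α₁ = 0, β = indicator of K
      have ha : a1 mm = 0 := by simp [a1, h]
      have hb : bet K mm = fun y => if y = K then 0 else 1 := by
        funext y; simp [bet, h]
      rw [ha, hb]
      simp only [ite01]
      rw [sumC K, sum_ite_eq_one, sumC' K, sumC' K]
      by_cases hK : K.val < m
      · rw [dif_pos hK, dif_pos hK, if_pos hK,
          if_pos (Fin.ext rfl : (Fin.castSucc ⟨K.val, hK⟩ : Fin (m+1)) = K),
          if_neg (fun hc => by have := congrArg Fin.val hc; simp at this; omega :
            ¬ (Fin.last m = K))]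
        norm_num
      · rw [dif_neg hK, dif_neg hK, if_neg hK]
        norm_num
    · -- mm = 2 : α₁ = 1, β = indicator of K
      have ha : a1 mm = 1 := by simp [a1, h]
      have hb : bet K mm = fun y => if y = K then 0 else 1 := by
        funext y; simp [bet, h]
      rw [ha, hb]
      simp only [ite01]
      rw [sumC K, sumC' K, sumC' K]
      by_cases hK : K.val < m
      · rw [dif_pos hK, dif_pos hK, if_pos hK,
          if_pos (Fin.ext rfl : (Fin.castSucc ⟨K.val, hK⟩ : Fin (m+1)) = K),
          if_neg (fun hc => by have := congrArg Fin.val hc; simp at this; omega :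
            ¬ (Fin.last m = K))]
        norm_num
      · rw [dif_neg hK, dif_neg hK, if_neg hK]
        norm_num
  · -- 3 ≤ mm : α₁ = 0, β = indicator of {K, j}
    set l := mm.val - 3 with hl
    have hlm : l + 1 ≤ m := by omega
    set j := sig K l with hj
    have hjK : j ≠ K := sig_ne hlm
    have ha : a1 mm = 0 := by unfold a1; rw [if_neg (by omega)]
    have hb : bet K mm = fun y => if y = K ∨ y = j then 0 else 1 := by
      funext y
      simp only [bet, hj, ← hl]
      rw [if_neg (by omega), if_neg (by omega)]
    rw [ha, hb]
    simp only [ite01]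
    have hsplit : ∀ y : Fin (m+1), (if y = K ∨ y = j then (1:ℝ) else 0)
        = (if y = K then (1:ℝ) else 0) + (if y = j then 1 else 0) := by
      intro y
      exact ite_or_split _ _ (fun hc => hjK (hc.2.symm.trans hc.1))
    simp only [hsplit]
    rw [Finset.sum_add_distrib, Finset.sum_add_distrib, sumC K, sumC j,
      sum_ite_eq_one, sum_ite_eq_one, sumC' K, sumC' K]
    have hKlt : K.val < m ∨ (K.val = m ∧ j.val < m) := by
      have := j.isLt
      have hjv : j.val ≠ K.val := fun hc => hjK (Fin.ext hc)
      have := K.isLt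
      omega
    by_cases hK : K.val < m
    · have hcK : (Fin.castSucc ⟨K.val, hK⟩ : Fin (m+1)) = K := Fin.ext rfl
      have hKne : ¬ ((Fin.castSucc ⟨K.val, hK⟩ : Fin (m+1)) = j) := by
        rw [hcK]; intro hc; exact hjK hc.symm
      have hlK : ¬ ((Fin.last m : Fin (m+1)) = K) := by
        intro hc; have := congrArg Fin.val hc; simp at this; omega
      rw [dif_pos hK, dif_pos hK, if_pos hK, if_pos hcK, if_neg hKne, if_neg hlK]
      by_cases hjm : j.val < m
      · rw [if_pos hjm, if_neg (fun hc => by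
          have := congrArg Fin.val hc; simp at this; omega : ¬ ((Fin.last m : Fin (m+1)) = j))]
        norm_num
      · rw [if_neg hjm, if_pos (Fin.ext (by have := j.isLt; simp; omega) :
          (Fin.last m : Fin (m+1)) = j)]
        norm_num
    · rcases hKlt with h | ⟨hKm, hjm⟩
      · exact absurd h hK
      rw [dif_neg hK, dif_neg hK, if_neg hK, if_pos hjm]
      norm_num


lemma v_zero (v : Fin (m+1) → Fin (m+3) → ℝ)
    (hE1 : ∀ y : Fin (m+1), (∑ K, ∑ mm, v K mm *
        ((if a1 mm = 0 then (1:ℝ) else 0) * (if bet K mm y = 0 then 1 else 0))) = 0)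
    (hE2 : ∀ (y aa : Fin (m+1)) (b : Fin 2), (∑ K, ∑ mm, v K mm *
        ((if K = aa then (1:ℝ) else 0) * (if bet K mm y = b then 1 else 0))) = 0) :
    ∀ K mm, v K mm = 0 := by
  have hcol : ∀ (K y : Fin (m+1)) (b : Fin 2),
      (∑ mm, v K mm * (if bet K mm y = b then 1 else 0)) = 0 := by
    intro K y b
    have h0 := hE2 y K b
    rw [collapse1 K] at h0
    · simpa using h0
    · intro K' hK'
      exact Finset.sum_eq_zero fun mm' _ => by rw [if_neg hK', zero_mul, mul_zero]
  have hA : ∀ (K : Fin (m+1)) (mm : Fin (m+3)), 3 ≤ mm.val → v K mm = 0 := by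
    intro K mm h3
    have hlm : mm.val - 3 + 1 ≤ m := by have := mm.isLt; omega
    have h0 := hcol K (sig K (mm.val - 3)) 0
    rw [collapse1 mm] at h0
    · have hb : bet K mm (sig K (mm.val - 3)) = 0 := by
        unfold bet
        rw [if_neg (by omega), if_neg (by omega), if_pos (Or.inr rfl)]
      rw [hb] at h0
      simpa using h0
    · intro mm' hne
      have hb : bet K mm' (sig K (mm.val - 3)) = 1 := by
        unfold bet
        by_cases h0' : mm'.val = 0
        · rw [if_pos h0']
        · rw [if_neg h0']
          by_cases h2' : mm'.val ≤ 2
          · rw [if_pos h2', if_neg (sig_ne hlm)]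
          · rw [if_neg h2', if_neg ?_]
            rintro (hc | hc)
            · exact sig_ne hlm hc
            · have hlm' : mm'.val - 3 + 1 ≤ m := by have := mm'.isLt; omega
              have := sig_inj hlm hlm' hc
              exact hne (Fin.ext (by omega))
      rw [hb]
      simp
  have hD : ∀ (K : Fin (m+1)) (mm : Fin (m+3)), mm.val = 0 → v K mm = 0 := by
    intro K mm h0v
    have h0 := hcol K K 1
    rw [collapse1 mm] at h0
    · have hb : bet K mm K = 1 := by unfold bet; rw [if_pos h0v]
      rw [hb] at h0
      simpa using h0
    · intro mm' hne
      have hb : bet K mm' K = 0 := by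
        unfold bet
        by_cases h0' : mm'.val = 0
        · exact absurd (Fin.ext (by omega) : mm' = mm) hne
        · rw [if_neg h0']
          by_cases h2' : mm'.val ≤ 2
          · rw [if_pos h2', if_pos rfl]
          · rw [if_neg h2', if_pos (Or.inl rfl)]
      rw [hb]
      simp
  have hB : ∀ (K : Fin (m+1)) (mm : Fin (m+3)), mm.val = 1 → v K mm = 0 := by
    intro K mm h1v
    have h0 := hE1 K
    have hin : ∀ K' : Fin (m+1), (∑ mm', v K' mm' *
        ((if a1 mm' = 0 then (1:ℝ) else 0) * (if bet K' mm' K = 0 then 1 else 0)))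
        = (if K' = K then v K' mm else 0) := by
      intro K'
      rw [collapse1 mm]
      · have ha : a1 mm = (0 : Fin 2) := by
          unfold a1; rw [if_neg (by omega)]
        have hb : bet K' mm K = if K = K' then 0 else 1 := by
          unfold bet; rw [if_neg (by omega), if_pos (by omega)]
        rw [ha, hb, if_pos rfl, one_mul]
        by_cases hKK : K = K'
        · rw [if_pos hKK, if_pos hKK.symm]
          simp
        · rw [if_neg hKK, if_neg (Ne.symm hKK)]
          simp
      · intro mm' hne
        by_cases h0' : mm'.val = 0
        · have ha : a1 mm' = (1 : Fin 2) := by unfold a1; rw [if_pos (Or.inl h0')]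
          rw [ha]
          norm_num
        · by_cases h2' : mm'.val = 2
          · have ha : a1 mm' = (1 : Fin 2) := by unfold a1; rw [if_pos (Or.inr h2')]
            rw [ha]
            norm_num
          · have h3' : 3 ≤ mm'.val := by
              have : mm'.val ≠ 1 := fun hc => hne (Fin.ext (by omega))
              omega
            rw [hA K' mm' h3', zero_mul]
    rw [Finset.sum_congr rfl (fun K' _ => hin K'), Finset.sum_ite_eq'] at h0
    simpa using h0
  have hC : ∀ (K : Fin (m+1)) (mm : Fin (m+3)), mm.val = 2 → v K mm = 0 := by
    intro K mm h2v
    have h0 := hcol K K 0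
    rw [collapse1 mm] at h0
    · have hb : bet K mm K = 0 := by
        unfold bet; rw [if_neg (by omega), if_pos (by omega), if_pos rfl]
      rw [hb] at h0
      simpa using h0
    · intro mm' hne
      by_cases h0' : mm'.val = 0
      · have hb : bet K mm' K = 1 := by unfold bet; rw [if_pos h0']
        rw [hb]
        simp
      · by_cases h1' : mm'.val = 1
        · rw [hB K mm' h1', zero_mul]
        · have h3' : 3 ≤ mm'.val := by
            have : mm'.val ≠ 2 := fun hc => hne (Fin.ext (by omega))
            omega
          rw [hA K mm' h3', zero_mul]
  intro K mm
  by_cases h0' : mm.val = 0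
  · exact hD K mm h0'
  by_cases h1' : mm.val = 1
  · exact hB K mm h1'
  by_cases h2' : mm.val = 2
  · exact hC K mm h2'
  exact hA K mm (by omega)


noncomputable def pt (K : Fin (m+1)) (mm : Fin (m+3)) :
    (Fin (m+1) → Fin 2 → Fin 2 → ℝ) × (Fin (m+1) → Fin (m+1) → Fin 2 → ℝ) :=
  (dP1 (a1 mm) (bet K mm), dP2 K (bet K mm))

end InFacet


/-- Theorem 4 of the paper: for every `n ≥ 2`, in the scenario
[(2 n),(2 2 … 2)], (i) every local behavior `P` satisfies `I_n(P) ≥ 0`, and (ii) there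
exist `n(n+2)` local behaviors saturating the inequality (`I_n = 0`) that are affinely
independent as points of the real vector space indexed by the coordinates `P(ab|xy)`.
(Since the local polytope of this scenario has affine dimension `n(n+2)`, this means
that `I_n ≥ 0` defines a facet of the local polytope.) -/
theorem In_is_facet
    (n : ℕ) (hn : 2 ≤ n) :
    (∀ (P1 : Fin n → Fin 2 → Fin 2 → ℝ) (P2 : Fin n → Fin n → Fin 2 → ℝ),
      IsLocal2n P1 P2 → 0 ≤ BellIn n hn P1 P2) ∧
    (∃ pts : Fin (n * (n + 2)) →
        (Fin n → Fin 2 → Fin 2 → ℝ) × (Fin n → Fin n → Fin 2 → ℝ),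
      (∀ i, IsLocal2n (pts i).1 (pts i).2) ∧
      (∀ i, BellIn n hn (pts i).1 (pts i).2 = 0) ∧
      AffineIndependent ℝ pts) := by
  obtain ⟨m, rfl⟩ : ∃ m, n = m + 1 := ⟨n - 1, by omega⟩
  constructor
  · rintro P1 P2 ⟨q, hq0, -, h1, h2⟩
    rw [InFacet.bell_local_eq hn P1 P2 q h1 h2]
    exact Finset.sum_nonneg fun a _ => Finset.sum_nonneg fun b _ =>
      Finset.sum_nonneg fun c _ =>
        mul_nonneg (hq0 a b c) (InFacet.detVal_nonneg a b c)
  · refine ⟨fun i => InFacet.pt (finProdFinEquiv.symm i).1 (finProdFinEquiv.symm i).2,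
      fun i => InFacet.dP_local _ _ _,
      fun i => (InFacet.bell_det hn _ _ _).trans (InFacet.detVal_pt _ _), ?_⟩
    rw [affineIndependent_iff_of_fintype]
    intro w hw hvs
    rw [Finset.weightedVSub_eq_linear_combination _ hw] at hvs
    set v : Fin (m+1) → Fin (m+3) → ℝ :=
      fun K mm => w (finProdFinEquiv (K, mm)) with hv
    have key1 : ∀ (y : Fin (m+1)) (a b : Fin 2),
        (∑ K, ∑ mm, v K mm * (InFacet.pt K mm).1 y a b) = 0 := by
      intro y a b
      have h := congrArg (fun z : ((Fin (m+1) → Fin 2 → Fin 2 → ℝ) ×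
          (Fin (m+1) → Fin (m+1) → Fin 2 → ℝ)) => z.1 y a b) hvs
      simp only [Prod.fst_sum, Prod.smul_fst, Finset.sum_apply, Pi.smul_apply,
        smul_eq_mul, Prod.fst_zero, Pi.zero_apply] at h
      rw [show (∑ K, ∑ mm, v K mm * (InFacet.pt K mm).1 y a b)
          = ∑ p : Fin (m+1) × Fin (m+3), v p.1 p.2 * (InFacet.pt p.1 p.2).1 y a b
        from (Fintype.sum_prod_type (fun p : Fin (m+1) × Fin (m+3) =>
          v p.1 p.2 * (InFacet.pt p.1 p.2).1 y a b)).symm]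
      have h2 := (Equiv.sum_comp finProdFinEquiv
        (fun x => w x * (InFacet.pt (finProdFinEquiv.symm x).1
          (finProdFinEquiv.symm x).2).1 y a b)).trans h
      simp only [Equiv.symm_apply_apply] at h2
      exact h2
    have key2 : ∀ (y aa : Fin (m+1)) (b : Fin 2),
        (∑ K, ∑ mm, v K mm * (InFacet.pt K mm).2 y aa b) = 0 := by
      intro y aa b
      have h := congrArg (fun z : ((Fin (m+1) → Fin 2 → Fin 2 → ℝ) ×
          (Fin (m+1) → Fin (m+1) → Fin 2 → ℝ)) => z.2 y aa b) hvs
      simp only [Prod.snd_sum, Prod.smul_snd, Finset.sum_apply, Pi.smul_apply,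
        smul_eq_mul, Prod.snd_zero, Pi.zero_apply] at h
      rw [show (∑ K, ∑ mm, v K mm * (InFacet.pt K mm).2 y aa b)
          = ∑ p : Fin (m+1) × Fin (m+3), v p.1 p.2 * (InFacet.pt p.1 p.2).2 y aa b
        from (Fintype.sum_prod_type (fun p : Fin (m+1) × Fin (m+3) =>
          v p.1 p.2 * (InFacet.pt p.1 p.2).2 y aa b)).symm]
      have h2 := (Equiv.sum_comp finProdFinEquiv
        (fun x => w x * (InFacet.pt (finProdFinEquiv.symm x).1
          (finProdFinEquiv.symm x).2).2 y aa b)).trans h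
      simp only [Equiv.symm_apply_apply] at h2
      exact h2
    have hz := InFacet.v_zero v (fun y => key1 y 0 0) key2
    intro i
    have h3 : w (finProdFinEquiv (finProdFinEquiv.symm i)) = 0 :=
      hz (finProdFinEquiv.symm i).1 (finProdFinEquiv.symm i).2
    rw [Equiv.apply_symm_apply] at h3
    exact h3
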